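/- Let b > 0, d > 1, ν ∈ ℕ₀, m ∈ ℤⁿ and R > 0, and let E ⊂ d·Q_{ν,m} be a Lebesgue-measurable set. Then for every x ∈ E one has (η_{ν,R} ∗ χ_{Q_{ν,m}})(x) = ∫_{Q_{ν,m}} 2^{nν}(1 + 2^ν|x − y|)^{−R} dy ≥ (1 + (1+d)√n)^{−R}. In particular, χ_E(x) ≤ c·(η_{ν,R} ∗ χ_{Q_{ν,m}})(x) for all x ∈ ℝⁿ, with the constant c = (1 + (1+d)√n)^{R} independent of ν and m. -/

import Mathlib

open MeasureTheory

noncomputable section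

/-- The closed axis-parallel cube in `ℝⁿ` centered at `z` with side length `l`. -/
def cube (n : ℕ) (z : EuclideanSpace ℝ (Fin n)) (l : ℝ) : Set (EuclideanSpace ℝ (Fin n)) :=
  {y | ∀ i, |y i - z i| ≤ l / 2}

/-- The lattice point `2^{-ν} m ∈ ℝⁿ`. -/
def latticePt (n : ℕ) (ν : ℕ) (m : Fin n → ℤ) : EuclideanSpace ℝ (Fin n) :=
  WithLp.toLp 2 (fun i => (2 : ℝ) ^ (-(ν : ℤ)) * (m i : ℝ))

lemma measurableSet_cube (n : ℕ) (z : EuclideanSpace ℝ (Fin n)) (l : ℝ) :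
    MeasurableSet (cube n z l) := by
  have h : cube n z l = ⋂ i, {y : EuclideanSpace ℝ (Fin n) | |y i - z i| ≤ l / 2} := by
    ext y; simp [cube, Set.mem_iInter]
  rw [h]
  exact MeasurableSet.iInter fun i =>
    (isClosed_le (((EuclideanSpace.proj i).continuous.sub continuous_const).abs)
      continuous_const).measurableSet

lemma isClosed_cube (n : ℕ) (z : EuclideanSpace ℝ (Fin n)) (l : ℝ) :
    IsClosed (cube n z l) := by
  have h : cube n z l = ⋂ i, {y : EuclideanSpace ℝ (Fin n) | |y i - z i| ≤ l / 2} := by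
    ext y; simp [cube, Set.mem_iInter]
  rw [h]
  exact isClosed_iInter fun i =>
    isClosed_le (((EuclideanSpace.proj i).continuous.sub continuous_const).abs) continuous_const

lemma norm_le_of_abs_le (n : ℕ) (v : EuclideanSpace ℝ (Fin n)) (c : ℝ) (hc : 0 ≤ c)
    (h : ∀ i, |v i| ≤ c) : ‖v‖ ≤ Real.sqrt n * c := by
  rw [EuclideanSpace.norm_eq]
  have h1 : ∑ i, ‖v i‖ ^ 2 ≤ ∑ _i : Fin n, c ^ 2 := by
    refine Finset.sum_le_sum fun i _ => ?_
    rw [Real.norm_eq_abs]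
    exact pow_le_pow_left₀ (abs_nonneg _) (h i) 2
  calc Real.sqrt (∑ i, ‖v i‖ ^ 2) ≤ Real.sqrt (∑ _i : Fin n, c ^ 2) := Real.sqrt_le_sqrt h1
    _ = Real.sqrt n * c := by
        rw [Finset.sum_const, Finset.card_univ, Fintype.card_fin, nsmul_eq_mul,
          Real.sqrt_mul (by positivity), Real.sqrt_sq hc]

lemma volume_cube (n : ℕ) (z : EuclideanSpace ℝ (Fin n)) (l : ℝ) :
    volume (cube n z l) = ENNReal.ofReal l ^ n := by
  have h : cube n z l =
      (MeasurableEquiv.toLp 2 (Fin n → ℝ)).symm ⁻¹'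
        (Set.univ.pi fun i => Set.Icc (z i - l / 2) (z i + l / 2)) := by
    ext y
    simp only [cube, Set.mem_setOf_eq, Set.mem_preimage, Set.mem_pi, Set.mem_univ,
      Set.mem_Icc, forall_true_left]
    constructor
    · intro hy i
      have := hy i; rw [abs_le] at this
      exact ⟨by change _ ≤ y i; linarith [this.1], by change y i ≤ _; linarith [this.2]⟩
    · intro hy i
      rw [abs_le]
      have h1 : z i - l / 2 ≤ y i := (hy i).1
      have h2 : y i ≤ z i + l / 2 := (hy i).2
      constructor <;> linarith
  rw [h, (EuclideanSpace.volume_preserving_symm_measurableEquiv_toLp (Fin n)).measure_preimage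
    (by measurability)]
  rw [volume_pi_pi]
  have hv : ∀ i : Fin n, volume (Set.Icc (z i - l / 2) (z i + l / 2)) = ENNReal.ofReal l := by
    intro i; rw [Real.volume_Icc]; congr 1; ring
  simp_rw [hv, Finset.prod_const, Finset.card_univ, Fintype.card_fin]

/-- If `E ⊆ d·Q_{ν,m}` is measurable, then for every `x ∈ E` one has
`(η_{ν,R} ∗ χ_{Q_{ν,m}})(x) ≥ (1+(1+d)√n)^{-R}`; in particular
`χ_E ≤ (1+(1+d)√n)^{R} · (η_{ν,R} ∗ χ_{Q_{ν,m}})` pointwise on `ℝⁿ`. -/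
theorem stmt_3 (n : ℕ) (b d : ℝ) (hb : 0 < b) (hd : 1 < d) (ν : ℕ) (m : Fin n → ℤ)
    (xc : EuclideanSpace ℝ (Fin n))
    (hxc : ‖xc - latticePt n ν m‖ ≤ b * (2 : ℝ) ^ (-(ν : ℤ)))
    (R : ℝ) (hR : 0 < R)
    (E : Set (EuclideanSpace ℝ (Fin n))) (hEmeas : MeasurableSet E)
    (hEQ : E ⊆ cube n xc (d * (2 : ℝ) ^ (-(ν : ℤ)))) :
    (∀ x ∈ E,
        (1 + (1 + d) * Real.sqrt n) ^ (-R)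
          ≤ ∫ y in cube n xc ((2 : ℝ) ^ (-(ν : ℤ))),
              (2 : ℝ) ^ (n * ν) * (1 + (2 : ℝ) ^ ν * ‖x - y‖) ^ (-R)) ∧
    (∀ x : EuclideanSpace ℝ (Fin n),
        E.indicator (fun _ => (1 : ℝ)) x
          ≤ (1 + (1 + d) * Real.sqrt n) ^ R *
            ∫ y in cube n xc ((2 : ℝ) ^ (-(ν : ℤ))),
              (2 : ℝ) ^ (n * ν) * (1 + (2 : ℝ) ^ ν * ‖x - y‖) ^ (-R)) := by
  set t : ℝ := (2 : ℝ) ^ (-(ν : ℤ)) with ht_def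
  have ht : 0 < t := by positivity
  set A : ℝ := 1 + (1 + d) * Real.sqrt n with hA_def
  have hdn : 0 ≤ (1 + d) * Real.sqrt n :=
    mul_nonneg (by linarith) (Real.sqrt_nonneg _)
  have hA1 : 1 ≤ A := by rw [hA_def]; linarith
  have hApos : 0 < A := lt_of_lt_of_le one_pos hA1
  have h2t : (2 : ℝ) ^ ν * t = 1 := by
    rw [ht_def, ← zpow_natCast (2 : ℝ) ν, ← zpow_add₀ (two_ne_zero)]
    simp
  have hQmeas := measurableSet_cube n xc t
  have key : ∀ x ∈ E, A ^ (-R)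
      ≤ ∫ y in cube n xc t, (2 : ℝ) ^ (n * ν) * (1 + (2 : ℝ) ^ ν * ‖x - y‖) ^ (-R) := by
    intro x hx
    have hdiff : ∀ y ∈ cube n xc t, 1 + (2 : ℝ) ^ ν * ‖x - y‖ ≤ A := by
      intro y hy
      have hxQ := hEQ hx
      have habs : ∀ i, |(x - y) i| ≤ (1 + d) * t / 2 := by
        intro i
        have h1 : |x i - xc i| ≤ d * t / 2 := hxQ i
        have h2 : |y i - xc i| ≤ t / 2 := hy i
        have hxy : (x - y) i = (x i - xc i) - (y i - xc i) := by
          show x i - y i = _; ring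
        rw [hxy]
        calc |(x i - xc i) - (y i - xc i)| ≤ |x i - xc i| + |y i - xc i| := abs_sub _ _
          _ ≤ (1 + d) * t / 2 := by linarith
      have hnorm : ‖x - y‖ ≤ Real.sqrt n * ((1 + d) * t / 2) :=
        norm_le_of_abs_le n (x - y) _ (by positivity) habs
      have h3 : (2 : ℝ) ^ ν * ‖x - y‖ ≤ Real.sqrt n * ((1 + d) / 2) := by
        have := mul_le_mul_of_nonneg_left hnorm (le_of_lt (pow_pos two_pos ν))
        have heq : (2 : ℝ) ^ ν * (Real.sqrt n * ((1 + d) * t / 2))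
            = Real.sqrt n * ((1 + d) / 2) * ((2 : ℝ) ^ ν * t) := by ring
        rw [heq, h2t, mul_one] at this
        exact this
      rw [hA_def]
      nlinarith [Real.sqrt_nonneg n, h3]
    have hcont : Continuous fun y : EuclideanSpace ℝ (Fin n) =>
        (2 : ℝ) ^ (n * ν) * (1 + (2 : ℝ) ^ ν * ‖x - y‖) ^ (-R) := by
      have hbase : Continuous fun y : EuclideanSpace ℝ (Fin n) =>
          1 + (2 : ℝ) ^ ν * ‖x - y‖ := by
        exact continuous_const.add (continuous_const.mul
          ((continuous_const.sub continuous_id).norm))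
      exact continuous_const.mul (hbase.rpow_const fun y => Or.inl (by positivity))
    have hcpt : IsCompact (cube n xc t) := by
      refine Metric.isCompact_of_isClosed_isBounded (isClosed_cube n xc t) ?_
      refine (Metric.isBounded_closedBall (x := xc) (r := Real.sqrt n * (t / 2))).subset ?_
      intro y hy
      rw [Metric.mem_closedBall, dist_eq_norm]
      refine norm_le_of_abs_le n (y - xc) _ (by positivity) fun i => ?_
      have : (y - xc) i = y i - xc i := rfl
      rw [this]; exact hy i
    have hint : IntegrableOn (fun y => (2 : ℝ) ^ (n * ν) * (1 + (2 : ℝ) ^ ν * ‖x - y‖) ^ (-R))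
        (cube n xc t) volume := hcont.continuousOn.integrableOn_compact hcpt
    have hlow : ∀ y ∈ cube n xc t,
        (2 : ℝ) ^ (n * ν) * A ^ (-R)
          ≤ (2 : ℝ) ^ (n * ν) * (1 + (2 : ℝ) ^ ν * ‖x - y‖) ^ (-R) := by
      intro y hy
      refine mul_le_mul_of_nonneg_left ?_ (by positivity)
      exact Real.rpow_le_rpow_of_nonpos (by positivity) (hdiff y hy) (by linarith)
    have hfin : volume (cube n xc t) ≠ ⊤ := by
      rw [volume_cube]; exact ENNReal.pow_ne_top ENNReal.ofReal_ne_top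
    have hge := setIntegral_ge_of_const_le_real hQmeas hfin hlow hint
    have hvol : (volume (cube n xc t)).toReal = t ^ n := by
      rw [volume_cube, ENNReal.toReal_pow, ENNReal.toReal_ofReal ht.le]
    have hone : (2 : ℝ) ^ (n * ν) * t ^ n = 1 := by
      rw [pow_mul', ← mul_pow, h2t, one_pow]
    have heq : (2 : ℝ) ^ (n * ν) * A ^ (-R) * (volume (cube n xc t)).toReal = A ^ (-R) := by
      rw [hvol, mul_comm ((2 : ℝ) ^ (n * ν)) (A ^ (-R)), mul_assoc, hone, mul_one]
    rw [measureReal_def, heq] at hge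
    exact hge
  refine ⟨key, fun x => ?_⟩
  by_cases hx : x ∈ E
  · rw [Set.indicator_of_mem hx]
    have h1 := key x hx
    have hmul : A ^ R * A ^ (-R) = 1 := by
      rw [← Real.rpow_add hApos]; simp
    calc (1 : ℝ) = A ^ R * A ^ (-R) := hmul.symm
      _ ≤ A ^ R * ∫ y in cube n xc t,
            (2 : ℝ) ^ (n * ν) * (1 + (2 : ℝ) ^ ν * ‖x - y‖) ^ (-R) :=
        mul_le_mul_of_nonneg_left h1 (Real.rpow_nonneg hApos.le R)
  · rw [Set.indicator_of_notMem hx]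
    have hI : 0 ≤ ∫ y in cube n xc t,
        (2 : ℝ) ^ (n * ν) * (1 + (2 : ℝ) ^ ν * ‖x - y‖) ^ (-R) :=
      setIntegral_nonneg hQmeas fun y _ => by positivity
    exact mul_nonneg (Real.rpow_nonneg hApos.le R) hI
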